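/- Let k ≥ 1 and let G be the simple graph on the 2k + 1 vertices a_1, b_1, …, a_k, b_k, v whose edges are {a_i, b_i} for 1 ≤ i ≤ k together with {v, a_i} and {v, b_i} for 1 ≤ i ≤ k. Then (a) the minimum size of a vertex cover of G is k + 1, and (b) every vertex cover of G that does not contain v has size at least 2k. -/

import Mathlib

def apexTriangles (k : ℕ) : SimpleGraph (Option (Fin k × Bool)) :=
  SimpleGraph.fromRel (fun u w =>
    (∃ i : Fin k, u = some (i, false) ∧ w = some (i, true)) ∨ (u = none ∧ w ≠ none))

theorem apexTriangles_cover_bounds (k : ℕ) (hk : 1 ≤ k) :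
    (∃ C : Finset (Option (Fin k × Bool)),
      (∀ u w, (apexTriangles k).Adj u w → u ∈ C ∨ w ∈ C) ∧ C.card = k + 1) ∧
    (∀ C : Finset (Option (Fin k × Bool)),
      (∀ u w, (apexTriangles k).Adj u w → u ∈ C ∨ w ∈ C) → k + 1 ≤ C.card) ∧
    (∀ C : Finset (Option (Fin k × Bool)),
      (∀ u w, (apexTriangles k).Adj u w → u ∈ C ∨ w ∈ C) → none ∉ C → 2 * k ≤ C.card) := by
  have adjAB : ∀ i : Fin k, (apexTriangles k).Adj (some (i,false)) (some (i,true)) := by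
    intro i; simp [apexTriangles, SimpleGraph.fromRel_adj]
  have adjV : ∀ p : Fin k × Bool, (apexTriangles k).Adj none (some p) := by
    intro p; simp [apexTriangles, SimpleGraph.fromRel_adj]
  -- the 2k bound
  have h2k : ∀ C : Finset (Option (Fin k × Bool)),
      (∀ u w, (apexTriangles k).Adj u w → u ∈ C ∨ w ∈ C) → none ∉ C → 2 * k ≤ C.card := by
    intro C hC hn
    have hsub : (Finset.univ.map ⟨some, Option.some_injective _⟩ :
        Finset (Option (Fin k × Bool))) ⊆ C := by
      intro x hx
      simp only [Finset.mem_map, Finset.mem_univ, Function.Embedding.coeFn_mk,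
        true_and] at hx
      obtain ⟨p, rfl⟩ := hx
      rcases hC _ _ (adjV p) with h | h
      · exact absurd h hn
      · exact h
    have := Finset.card_le_card hsub
    simpa [Fintype.card_prod, mul_comm] using this
  refine ⟨?_, ?_, h2k⟩
  · -- existence of cover of size k+1
    refine ⟨insert none (Finset.univ.map ⟨fun i : Fin k => some (i, false),
      by intro a b hab; simpa using hab⟩), ?_, ?_⟩
    · intro u w huw
      rw [apexTriangles, SimpleGraph.fromRel_adj] at huw
      obtain ⟨hne, h | h⟩ := huw.imp_right id
      · rcases h with ⟨i, rfl, rfl⟩ | ⟨rfl, -⟩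
        · left; simp; exact ⟨i, rfl⟩
        · left; simp
      · rcases h with ⟨i, rfl, rfl⟩ | ⟨rfl, -⟩
        · right; simp; exact ⟨i, rfl⟩
        · right; simp
    · rw [Finset.card_insert_of_notMem (by simp), Finset.card_map]
      simp [add_comm]
  · -- lower bound k+1
    intro C hC
    by_cases hn : none ∈ C
    · have hcov : ∀ i : Fin k, some (i, false) ∈ C ∨ some (i, true) ∈ C :=
        fun i => hC _ _ (adjAB i)
      classical
      set g : Fin k → Option (Fin k × Bool) :=
        fun i => if some (i, false) ∈ C then some (i, false) else some (i, true) with hg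
      have hgC : ∀ i, g i ∈ C := by
        intro i
        by_cases h : some (i, false) ∈ C
        · simp [hg, h]
        · simp only [hg, if_neg h]
          exact (hcov i).resolve_left h
      have hginj : Function.Injective g := by
        intro i j hij
        simp only [hg] at hij
        split_ifs at hij <;> simp_all
      have hsub : insert none (Finset.univ.image g) ⊆ C := by
        intro x hx
        rcases Finset.mem_insert.mp hx with rfl | hx
        · exact hn
        · obtain ⟨i, -, rfl⟩ := Finset.mem_image.mp hx
          exact hgC i
      have hcard : (insert none (Finset.univ.image g)).card = k + 1 := by
        rw [Finset.card_insert_of_notMem, Finset.card_image_of_injective _ hginj]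
        · simp [add_comm]
        · simp only [Finset.mem_image, Finset.mem_univ, true_and, not_exists, hg]
          intro i; split_ifs <;> simp
      calc k + 1 = (insert none (Finset.univ.image g)).card := hcard.symm
        _ ≤ C.card := Finset.card_le_card hsub
    · have := h2k C hC hn
      omega
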